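/- (Asymptotic data contamination bound) Let G and H be joint distributions of (X,Y) on ℝ^p × {0,1} with the X-marginal of G admitting a density, let 0 ≤ ε < 1, let G̃ = (1-ε)G + εH, and assume G̃(η̃(X)=0) = 0 where η̃ is the Bayes decision function of G̃. If (f̃_n) is a sequence of decision functions whose risks under G̃ converge to the Bayes risk under G̃, then limsup_{n→∞} ( R_G(f̃_n) - R_G* ) ≤ ε/(1-ε), where R_G* is the Bayes risk under G. -/

import Mathlib

open MeasureTheory Filter

/-- sign function: 1 if t > 0, -1 otherwise. -/
noncomputable def sgn (t : ℝ) : ℝ := if 0 < t then 1 else -1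

/-- Risk under 0-1 loss of the decision rule `1_{f(X)>0}` when `(X,Y) ~ P`,
    labels encoded as `Bool` (`true` = 1): `R(f) = P(Y ≠ 1_{f(X)>0})`. -/
noncomputable def risk {𝒳 : Type*} [MeasurableSpace 𝒳]
    (P : Measure (𝒳 × Bool)) (f : 𝒳 → ℝ) : ℝ :=
  (P {q | (q.2 = true) ≠ (0 < f q.1)}).toReal

/-- `η` is the Bayes decision function of the joint distribution `P` of `(X,Y)`:
    `η(x) = P(Y=1 | X=x) - 1/2`, i.e. `η` is measurable, takes values in `[-1/2,1/2]`,
    and `∫_A (η + 1/2) dP_X = P(A × {1})` for all measurable `A`. -/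
def IsBayesDecisionFunction {𝒳 : Type*} [MeasurableSpace 𝒳]
    (P : Measure (𝒳 × Bool)) (η : 𝒳 → ℝ) : Prop :=
  Measurable η ∧ (∀ x, η x ∈ Set.Icc (-(1/2) : ℝ) (1/2)) ∧
    ∀ A : Set 𝒳, MeasurableSet A →
      ∫ x in A, (η x + 1/2) ∂(P.map Prod.fst) = (P (A ×ˢ ({true} : Set Bool))).toReal

/-- The contaminated distribution `G̃ = (1-ε)G + εH`. -/
noncomputable def contaminate {Ω : Type*} [MeasurableSpace Ω]
    (G H : Measure Ω) (ε : ℝ) : Measure Ω :=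
  ENNReal.ofReal (1 - ε) • G + ENNReal.ofReal ε • H

lemma risk_nonneg {𝒳 : Type*} [MeasurableSpace 𝒳] (P : Measure (𝒳 × Bool)) (f : 𝒳 → ℝ) :
    0 ≤ risk P f := ENNReal.toReal_nonneg

lemma risk_le_one {𝒳 : Type*} [MeasurableSpace 𝒳] (P : Measure (𝒳 × Bool))
    [IsProbabilityMeasure P] (f : 𝒳 → ℝ) : risk P f ≤ 1 := by
  have h := ENNReal.toReal_mono (measure_ne_top P Set.univ)
    (measure_mono (Set.subset_univ {q : 𝒳 × Bool | (q.2 = true) ≠ (0 < f q.1)}))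
  simpa [risk] using h

lemma intF {𝒳 : Type*} [MeasurableSpace 𝒳] {μ : Measure 𝒳} [IsProbabilityMeasure μ]
    {η f : 𝒳 → ℝ} (hη : Measurable η) (hb : ∀ x, η x ∈ Set.Icc (-(1/2) : ℝ) (1/2))
    (hf : Measurable f) :
    Integrable (fun x => if 0 < f x then 1/2 - η x else η x + 1/2) μ := by
  refine ⟨(Measurable.ite (measurableSet_lt measurable_const hf)
    (measurable_const.sub hη) (hη.add_const _)).aestronglyMeasurable,
    HasFiniteIntegral.of_bounded (C := 1) (ae_of_all _ fun x => ?_)⟩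
  have := hb x
  simp only [Set.mem_Icc] at this
  by_cases h : 0 < f x <;> simp [h, Real.norm_eq_abs, abs_le] <;> constructor <;> linarith [this.1, this.2]

lemma risk_eq_integral {𝒳 : Type*} [MeasurableSpace 𝒳] (P : Measure (𝒳 × Bool))
    [IsProbabilityMeasure P] {η : 𝒳 → ℝ} (hη : IsBayesDecisionFunction P η)
    {f : 𝒳 → ℝ} (hf : Measurable f) :
    risk P f = ∫ x, (if 0 < f x then 1/2 - η x else η x + 1/2) ∂(P.map Prod.fst) := by
  obtain ⟨hηm, hηb, hηint⟩ := hη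
  set μ := P.map Prod.fst with hμdef
  have hμP : IsProbabilityMeasure μ := Measure.isProbabilityMeasure_map measurable_fst.aemeasurable
  set B : Set 𝒳 := {x | 0 < f x} with hBdef
  have hB : MeasurableSet B := measurableSet_lt measurable_const hf
  have hset : {q : 𝒳 × Bool | (q.2 = true) ≠ (0 < f q.1)}
      = (Bᶜ ×ˢ ({true} : Set Bool)) ∪ (B ×ˢ ({false} : Set Bool)) := by
    ext ⟨x, y⟩
    cases y <;> simp [hBdef, eq_iff_iff] <;> tauto
  have hdisj : Disjoint (Bᶜ ×ˢ ({true} : Set Bool)) (B ×ˢ ({false} : Set Bool)) := by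
    rw [Set.disjoint_left]
    rintro ⟨x, y⟩ h1 h2
    have := h1.2; have := h2.2; simp_all
  have hPsum : P {q : 𝒳 × Bool | (q.2 = true) ≠ (0 < f q.1)}
      = P (Bᶜ ×ˢ ({true} : Set Bool)) + P (B ×ˢ ({false} : Set Bool)) := by
    rw [hset]; exact measure_union hdisj (hB.prod (measurableSet_singleton _))
  -- μ B in terms of true/false pieces
  have hBuniv : μ B = P (B ×ˢ ({true} : Set Bool)) + P (B ×ˢ ({false} : Set Bool)) := by
    rw [hμdef, Measure.map_apply measurable_fst hB]
    have : (Prod.fst ⁻¹' B : Set (𝒳 × Bool))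
        = (B ×ˢ ({true} : Set Bool)) ∪ (B ×ˢ ({false} : Set Bool)) := by
      ext ⟨x, y⟩; cases y <;> simp
    rw [this]
    refine measure_union ?_ (hB.prod (measurableSet_singleton _))
    rw [Set.disjoint_left]; rintro ⟨x, y⟩ h1 h2
    have := h1.2; have := h2.2; simp_all
  have hfalse : (P (B ×ˢ ({false} : Set Bool))).toReal
      = (μ B).toReal - ∫ x in B, (η x + 1/2) ∂μ := by
    rw [hηint B hB, hBuniv, ENNReal.toReal_add (measure_ne_top _ _) (measure_ne_top _ _)]
    ring
  have hintη : Integrable (fun x => η x + 1/2) μ := by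
    refine ⟨(hηm.add_const _).aestronglyMeasurable,
      HasFiniteIntegral.of_bounded (C := 1) (ae_of_all _ fun x => ?_)⟩
    have := hηb x; simp only [Set.mem_Icc] at this
    rw [Real.norm_eq_abs, abs_le]; constructor <;> linarith [this.1, this.2]
  have hintF := intF (μ := μ) hηm hηb hf
  -- split the integral
  have hsplit : ∫ x, (if 0 < f x then 1/2 - η x else η x + 1/2) ∂μ
      = (∫ x in B, (if 0 < f x then 1/2 - η x else η x + 1/2) ∂μ)
        + ∫ x in Bᶜ, (if 0 < f x then 1/2 - η x else η x + 1/2) ∂μ :=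
    (integral_add_compl hB hintF).symm
  have hIB : ∫ x in B, (if 0 < f x then 1/2 - η x else η x + 1/2) ∂μ
      = (μ B).toReal - ∫ x in B, (η x + 1/2) ∂μ := by
    rw [setIntegral_congr_fun hB (g := fun x => 1 - (η x + 1/2)) (fun x hx => by
      simp only [if_pos (show 0 < f x from hx)]; ring)]
    rw [integral_sub (integrable_const 1).restrict hintη.restrict]
    simp
    rfl
  have hIBc : ∫ x in Bᶜ, (if 0 < f x then 1/2 - η x else η x + 1/2) ∂μ
      = ∫ x in Bᶜ, (η x + 1/2) ∂μ :=
    setIntegral_congr_fun hB.compl (fun x hx => by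
      simp only [if_neg (show ¬ 0 < f x from hx)])
  rw [risk, hPsum, ENNReal.toReal_add (measure_ne_top _ _) (measure_ne_top _ _),
    hsplit, hIB, hIBc, hfalse, ← hηint Bᶜ hB.compl]
  ring

lemma bayes_optimal {𝒳 : Type*} [MeasurableSpace 𝒳] (P : Measure (𝒳 × Bool))
    [IsProbabilityMeasure P] {η : 𝒳 → ℝ} (hη : IsBayesDecisionFunction P η)
    {f : 𝒳 → ℝ} (hf : Measurable f) : risk P η ≤ risk P f := by
  have hμP : IsProbabilityMeasure (P.map Prod.fst) :=
    Measure.isProbabilityMeasure_map measurable_fst.aemeasurable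
  rw [risk_eq_integral P hη hη.1, risk_eq_integral P hη hf]
  refine integral_mono (intF hη.1 hη.2.1 hη.1) (intF hη.1 hη.2.1 hf) fun x => ?_
  by_cases h1 : 0 < η x <;> by_cases h2 : 0 < f x <;> simp [h1, h2] <;>
    first
    | linarith
    | (push_neg at h1; linarith)

lemma contaminate_prob {Ω : Type*} [MeasurableSpace Ω] (G H : Measure Ω)
    [IsProbabilityMeasure G] [IsProbabilityMeasure H] {ε : ℝ} (hε : 0 ≤ ε) (hε1 : ε ≤ 1) :
    IsProbabilityMeasure (contaminate G H ε) := by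
  constructor
  rw [contaminate, Measure.add_apply, Measure.smul_apply, Measure.smul_apply,
    measure_univ, measure_univ, smul_eq_mul, smul_eq_mul, mul_one, mul_one,
    ← ENNReal.ofReal_add (by linarith) hε]
  norm_num

lemma risk_contaminate {Ω : Type*} [MeasurableSpace Ω] (G H : Measure (Ω × Bool))
    [IsProbabilityMeasure G] [IsProbabilityMeasure H] {ε : ℝ} (hε : 0 ≤ ε) (hε1 : ε ≤ 1)
    (f : Ω → ℝ) :
    risk (contaminate G H ε) f = (1 - ε) * risk G f + ε * risk H f := by
  rw [risk, risk, risk, contaminate, Measure.add_apply, Measure.smul_apply,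
    Measure.smul_apply, smul_eq_mul, smul_eq_mul,
    ENNReal.toReal_add (by finiteness) (by finiteness),
    ENNReal.toReal_mul, ENNReal.toReal_mul, ENNReal.toReal_ofReal (by linarith),
    ENNReal.toReal_ofReal hε]

/-- Asymptotic data contamination bound:
limsup_n (R_G(f̃_n) - R_G*) ≤ ε/(1-ε). -/
theorem statement11 {p : ℕ}
    (G H : Measure ((Fin p → ℝ) × Bool))
    [IsProbabilityMeasure G] [IsProbabilityMeasure H]
    (g : (Fin p → ℝ) → ℝ)
    (hGg : G.map Prod.fst = volume.withDensity fun x => ENNReal.ofReal (g x))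
    (ε : ℝ) (hε : 0 ≤ ε) (hε1 : ε < 1)
    (η ηt : (Fin p → ℝ) → ℝ)
    (hη : IsBayesDecisionFunction G η)
    (hηt : IsBayesDecisionFunction (contaminate G H ε) ηt)
    (hηt0 : (contaminate G H ε).map Prod.fst {x | ηt x = 0} = 0)
    (f : ℕ → (Fin p → ℝ) → ℝ) (hf : ∀ n, Measurable (f n))
    (hrisk : Tendsto (fun n => risk (contaminate G H ε) (f n)) atTop
      (nhds (risk (contaminate G H ε) ηt))) :
    limsup (fun n => risk G (f n) - risk G η) atTop ≤ ε / (1 - ε) := by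
  have hεle : ε ≤ 1 := hε1.le
  have h1ε : (0:ℝ) < 1 - ε := by linarith
  have hP : IsProbabilityMeasure (contaminate G H ε) := contaminate_prob G H hε hεle
  set Gt := contaminate G H ε with hGt
  -- key pointwise bound
  have key : ∀ n, risk G (f n) - risk G η
      ≤ (risk Gt (f n) - risk Gt ηt) / (1 - ε) + ε / (1 - ε) := by
    intro n
    have hmixf := risk_contaminate G H hε hεle (f n)
    have hmixη := risk_contaminate G H hε hεle η
    have hopt : risk Gt ηt ≤ risk Gt η := bayes_optimal Gt hηt hη.1
    have h1 : 0 ≤ risk H (f n) := risk_nonneg H (f n)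
    have h2 : risk H η ≤ 1 := risk_le_one H η
    rw [← add_div, le_div_iff₀ h1ε]
    nlinarith [hopt, hmixf, hmixη]
  -- the bounding sequence tends to ε/(1-ε)
  have hb : Tendsto (fun n => (risk Gt (f n) - risk Gt ηt) / (1 - ε) + ε / (1 - ε))
      atTop (nhds (ε / (1 - ε))) := by
    have : Tendsto (fun n => risk Gt (f n) - risk Gt ηt) atTop (nhds 0) := by
      have := hrisk.sub (tendsto_const_nhds (x := risk Gt ηt) (f := atTop))
      simpa using this
    have h2 := (this.div_const (1 - ε)).add
      (tendsto_const_nhds (x := ε / (1 - ε)) (f := atTop))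
    simpa using h2
  have hcobdd : IsCoboundedUnder (· ≤ ·) atTop (fun n => risk G (f n) - risk G η) := by
    refine IsBoundedUnder.isCoboundedUnder_le (isBoundedUnder_of ⟨-1, fun n => ?_⟩)
    have := risk_nonneg G (f n); have := risk_le_one G η
    linarith
  calc limsup (fun n => risk G (f n) - risk G η) atTop
      ≤ limsup (fun n => (risk Gt (f n) - risk Gt ηt) / (1 - ε) + ε / (1 - ε)) atTop :=
        limsup_le_limsup (Eventually.of_forall key) hcobdd hb.isBoundedUnder_le
    _ = ε / (1 - ε) := hb.limsup_eq
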